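/- Let G be a topological group and V a finite-dimensional real vector space regarded as a trivial G-module. Let C_cts^n(G,V)^G be the complex of continuous G-invariant homogeneous cochains, on which Σ_{n+1} acts by permuting the arguments of a cochain. Then the coboundary preserves the sign decomposition C_cts^n(G,V)^G = sC_cts^n(G,V)^G ⊕ rC_cts^n(G,V)^G, and the cohomology of the subcomplex rC_cts^•(G,V)^G vanishes in every degree; equivalently, the inclusion of the alternating subcomplex sC_cts^•(G,V)^G into C_cts^•(G,V)^G induces an isomorphism on cohomology. -/

import Mathlib

/-- `G`-invariance of a homogeneous cochain (the module `V` being a trivial module). -/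
def InvFull (G : Type*) [Group G] {V : Type*} [AddCommGroup V] {ℓ : ℕ}
    (f : (Fin ℓ → G) → V) : Prop :=
  ∀ (g : G) (x : Fin ℓ → G), f (fun i => g * x i) = f x

/-- The homogeneous coboundary `δ` on cochains. -/
noncomputable def dFull {G V : Type*} [AddCommGroup V] {ℓ : ℕ}
    (f : (Fin ℓ → G) → V) : (Fin (ℓ + 1) → G) → V :=
  fun x => ∑ i : Fin (ℓ + 1), ((-1 : ℤ) ^ (i : ℕ)) • f (fun j => x (i.succAbove j))

/-- The alternating projector `Alt = (1/ℓ!) Σ_{σ ∈ Σ_ℓ} sgn(σ) σ` on homogeneous cochains,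
where `Σ_ℓ` acts by permuting the arguments. -/
noncomputable def altCochainR {G V : Type*} [AddCommGroup V]
    [Module ℝ V] {ℓ : ℕ} (f : (Fin ℓ → G) → V) : (Fin ℓ → G) → V :=
  fun x => (Nat.factorial ℓ : ℝ)⁻¹ •
    ∑ σ : Equiv.Perm (Fin ℓ), (((Equiv.Perm.sign σ : ℤ) : ℝ)) • f (x ∘ σ)


set_option linter.unusedSectionVars false
set_option maxHeartbeats 1000000

namespace CGCAuxProof

open Equiv Finset

variable {G : Type*} {V : Type*} [AddCommGroup V] [Module ℝ V]

lemma dXeq {ℓ : ℕ} (f : (Fin ℓ → G) → V) (x : Fin (ℓ+1) → G) :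
    dFull f x = ∑ i : Fin (ℓ + 1), ((-1 : ℝ) ^ (i : ℕ)) • f (x ∘ i.succAbove) := by
  unfold dFull
  refine Finset.sum_congr rfl fun i _ => ?_
  rw [← Int.cast_smul_eq_zsmul ℝ]
  push_cast
  rfl

lemma comp_e_succAbove {ℓ : ℕ} (i k : Fin (ℓ+1)) (σ : Perm (Fin ℓ)) (j : Fin ℓ) :
    ((k.cycleRange)⁻¹ * Equiv.Perm.decomposeFin.symm (0, σ) * i.cycleRange) (i.succAbove j)
      = k.succAbove (σ j) := by
  simp [Equiv.Perm.mul_apply, Fin.cycleRange_succAbove,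
    Equiv.Perm.decomposeFin_symm_apply_succ, Equiv.Perm.inv_def, Fin.cycleRange_symm_succ]

lemma sign_e {ℓ : ℕ} (i k : Fin (ℓ+1)) (σ : Perm (Fin ℓ)) :
    Equiv.Perm.sign ((k.cycleRange)⁻¹ * Equiv.Perm.decomposeFin.symm (0, σ) * i.cycleRange)
      = (-1 : ℤˣ)^(k:ℕ) * Equiv.Perm.sign σ * (-1 : ℤˣ)^(i:ℕ) := by
  simp [Fin.sign_cycleRange, Equiv.Perm.decomposeFin.symm_sign]

lemma e_bijective {ℓ : ℕ} (i : Fin (ℓ+1)) :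
    Function.Bijective (fun p : Fin (ℓ+1) × Perm (Fin ℓ) =>
      (p.1.cycleRange)⁻¹ * Equiv.Perm.decomposeFin.symm (0, p.2) * i.cycleRange) := by
  have h0 : Function.Bijective (fun p : Fin (ℓ+1) × Perm (Fin ℓ) =>
      (p.1.cycleRange)⁻¹ * Equiv.Perm.decomposeFin.symm (0, p.2)) := by
    rw [Fintype.bijective_iff_injective_and_card]
    constructor
    · rintro ⟨k, σ⟩ ⟨k', σ'⟩ h
      have hk : k = k' := by
        have := DFunLike.congr_fun h (0 : Fin (ℓ+1))
        simpa [Equiv.Perm.mul_apply, Equiv.Perm.inv_def] using this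
      subst hk
      have hσ : Equiv.Perm.decomposeFin.symm (0, σ) = Equiv.Perm.decomposeFin.symm (0, σ') :=
        mul_left_cancel h
      have := Equiv.Perm.decomposeFin.symm.injective hσ
      simp only [Prod.mk.injEq] at this
      simp [this.2]
    · simp [Fintype.card_perm, Nat.factorial_succ]
  exact (Equiv.mulRight i.cycleRange).bijective.comp h0

/-- sign as a real number -/
noncomputable def sgn {ℓ : ℕ} (σ : Perm (Fin ℓ)) : ℝ := ((Equiv.Perm.sign σ : ℤ) : ℝ)

lemma sgn_e {ℓ : ℕ} (i k : Fin (ℓ+1)) (σ : Perm (Fin ℓ)) :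
    sgn ((k.cycleRange)⁻¹ * Equiv.Perm.decomposeFin.symm (0, σ) * i.cycleRange)
      = (-1 : ℝ)^(k:ℕ) * sgn σ * (-1 : ℝ)^(i:ℕ) := by
  unfold sgn
  rw [sign_e]
  push_cast
  ring

lemma alt_d {ℓ : ℕ} (f : (Fin ℓ → G) → V) :
    altCochainR (dFull f) = dFull (altCochainR f) := by
  funext x
  -- canonical double sum
  set S2 : V := ∑ p : Fin (ℓ+1) × Perm (Fin ℓ),
      ((-1:ℝ)^(p.1:ℕ) * sgn p.2) • f (x ∘ p.1.succAbove ∘ p.2) with hS2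
  have hfact : ((ℓ.factorial : ℝ)) ≠ 0 := by
    exact_mod_cast Nat.factorial_ne_zero ℓ
  have hRHS : dFull (altCochainR f) x = (ℓ.factorial : ℝ)⁻¹ • S2 := by
    rw [dXeq]
    have : ∀ i : Fin (ℓ+1), ((-1 : ℝ) ^ (i : ℕ)) • altCochainR f (x ∘ i.succAbove)
        = (ℓ.factorial : ℝ)⁻¹ • ∑ σ : Perm (Fin ℓ),
            ((-1:ℝ)^(i:ℕ) * sgn σ) • f (x ∘ i.succAbove ∘ σ) := by
      intro i
      unfold altCochainR
      rw [smul_comm, Finset.smul_sum]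
      congr 1
      refine Finset.sum_congr rfl fun σ _ => ?_
      rw [smul_smul]
      rfl
    rw [Finset.sum_congr rfl fun i _ => this i, ← Finset.smul_sum]
    congr 1
    rw [hS2, Fintype.sum_prod_type]
  have hLHS : altCochainR (dFull f) x = ((ℓ+1).factorial : ℝ)⁻¹ •
      ∑ τ : Perm (Fin (ℓ+1)), ∑ i : Fin (ℓ+1),
        (sgn τ * (-1:ℝ)^(i:ℕ)) • f (x ∘ τ ∘ i.succAbove) := by
    unfold altCochainR
    congr 1
    refine Finset.sum_congr rfl fun τ _ => ?_
    rw [dXeq, Finset.smul_sum]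
    refine Finset.sum_congr rfl fun i _ => ?_
    rw [smul_smul]
    rfl
  rw [hLHS, hRHS]
  have hswap : (∑ τ : Perm (Fin (ℓ+1)), ∑ i : Fin (ℓ+1),
        (sgn τ * (-1:ℝ)^(i:ℕ)) • f (x ∘ τ ∘ i.succAbove))
      = (ℓ+1 : ℕ) • S2 := by
    rw [Finset.sum_comm]
    have hinner : ∀ i : Fin (ℓ+1), (∑ τ : Perm (Fin (ℓ+1)),
        (sgn τ * (-1:ℝ)^(i:ℕ)) • f (x ∘ τ ∘ i.succAbove)) = S2 := by
      intro i
      rw [hS2]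
      refine (Fintype.sum_bijective _ (e_bijective i) _ _ ?_).symm
      rintro ⟨k, σ⟩
      have hcomp : x ∘ ⇑((k.cycleRange)⁻¹ * Equiv.Perm.decomposeFin.symm (0, σ) * i.cycleRange)
          ∘ i.succAbove = x ∘ k.succAbove ∘ σ := by
        funext j
        simp only [Function.comp_apply]
        rw [comp_e_succAbove]
      rw [hcomp, sgn_e]
      congr 1
      have : (-1:ℝ)^(i:ℕ) * (-1:ℝ)^(i:ℕ) = 1 := by
        rw [← mul_pow]; norm_num
      rw [mul_assoc, this, mul_one]
    rw [Finset.sum_congr rfl fun i _ => hinner i, Finset.sum_const]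
    simp
  rw [hswap, ← Nat.cast_smul_eq_nsmul ℝ, smul_smul]
  congr 1
  have h1 : ((ℓ:ℝ)+1) ≠ 0 := by positivity
  rw [Nat.factorial_succ]
  push_cast
  field_simp


def K {ℓ : ℕ} (a : G) (f : (Fin (ℓ+1) → G) → V) : (Fin ℓ → G) → V :=
  fun y => f (Fin.cons a y)

-- linearity
lemma dXsub {ℓ : ℕ} (f g : (Fin ℓ → G) → V) : dFull (f - g) = dFull f - dFull g := by
  funext x
  simp [dFull, smul_sub, Finset.sum_sub_distrib]

lemma dXzero {ℓ : ℕ} : dFull (0 : (Fin ℓ → G) → V) = 0 := by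
  funext x
  simp [dFull]

lemma aXsub {ℓ : ℕ} (f g : (Fin ℓ → G) → V) : altCochainR (f - g) = altCochainR f - altCochainR g := by
  funext x
  simp [altCochainR, smul_sub, Finset.sum_sub_distrib]

lemma aXzero {ℓ : ℕ} : altCochainR (0 : (Fin ℓ → G) → V) = 0 := by
  funext x
  simp [altCochainR]

lemma K_sub {ℓ : ℕ} (a : G) (f g : (Fin (ℓ+1) → G) → V) : K a (f - g) = K a f - K a g := rfl

-- alt is the identity in degree 0 (one variable)
lemma aXone {f : (Fin 1 → G) → V} : altCochainR f = f := by
  haveI : Subsingleton (Perm (Fin 1)) :=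
    ⟨fun a b => Equiv.ext fun i => Fin.ext (by omega)⟩
  funext x
  rw [altCochainR, Fintype.sum_subsingleton _ (1 : Perm (Fin 1))]
  have hx : x ∘ ⇑(1 : Perm (Fin 1)) = x := rfl
  rw [hx]
  simp

-- idempotence
lemma aXidem {ℓ : ℕ} (f : (Fin ℓ → G) → V) : altCochainR (altCochainR f) = altCochainR f := by
  have h2 : ∀ σ : Perm (Fin ℓ),
      (((Equiv.Perm.sign σ : ℤ) : ℝ)) * (((Equiv.Perm.sign σ : ℤ) : ℝ)) = 1 := by
    intro σ
    rcases Int.units_eq_one_or (Equiv.Perm.sign σ) with h | h <;> rw [h] <;> norm_num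
  funext x
  have key : ∀ σ : Perm (Fin ℓ),
      (∑ τ : Perm (Fin ℓ), (((Equiv.Perm.sign τ : ℤ) : ℝ)) • f ((x ∘ ⇑σ) ∘ ⇑τ))
        = (((Equiv.Perm.sign σ : ℤ) : ℝ)) •
          ∑ ρ : Perm (Fin ℓ), (((Equiv.Perm.sign ρ : ℤ) : ℝ)) • f (x ∘ ⇑ρ) := by
    intro σ
    rw [Finset.smul_sum]
    refine Fintype.sum_bijective (fun τ => σ * τ) (Group.mulLeft_bijective σ) _ _ ?_
    intro τ
    have hcomp : (x ∘ ⇑σ) ∘ ⇑τ = x ∘ ⇑(σ * τ) := rfl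
    rw [hcomp, smul_smul]
    congr 1
    rw [map_mul]
    push_cast
    rcases Int.units_eq_one_or (Equiv.Perm.sign σ) with h | h <;> rw [h] <;> push_cast <;> ring
  have hstep : ∀ σ : Perm (Fin ℓ),
      (((Equiv.Perm.sign σ : ℤ) : ℝ)) • altCochainR f (x ∘ ⇑σ)
        = (ℓ.factorial : ℝ)⁻¹ •
          ∑ ρ : Perm (Fin ℓ), (((Equiv.Perm.sign ρ : ℤ) : ℝ)) • f (x ∘ ⇑ρ) := by
    intro σ
    show (((Equiv.Perm.sign σ : ℤ) : ℝ)) • ((ℓ.factorial : ℝ)⁻¹ •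
      ∑ τ : Perm (Fin ℓ), (((Equiv.Perm.sign τ : ℤ) : ℝ)) • f ((x ∘ ⇑σ) ∘ ⇑τ)) = _
    rw [key σ, smul_smul, smul_smul, mul_right_comm, h2 σ, one_mul]
  show (ℓ.factorial : ℝ)⁻¹ • ∑ σ : Perm (Fin ℓ),
      (((Equiv.Perm.sign σ : ℤ) : ℝ)) • altCochainR f (x ∘ ⇑σ) = _
  rw [Finset.sum_congr rfl fun σ _ => hstep σ, Finset.sum_const, Finset.card_univ,
    Fintype.card_perm, Fintype.card_fin, ← Nat.cast_smul_eq_nsmul ℝ, smul_smul, smul_smul]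
  have hfact : ((ℓ.factorial : ℝ)) ≠ 0 := by exact_mod_cast Nat.factorial_ne_zero ℓ
  rw [inv_mul_cancel₀ hfact, one_mul]
  rfl

-- the cone identity K a ∘ dFull = id - dFull ∘ K a
lemma cons_comp_succAbove_succ {ℓ : ℕ} (a : G) (y : Fin (ℓ+1) → G) (i : Fin (ℓ+1)) :
    (Fin.cons a y) ∘ (Fin.succAbove i.succ) = Fin.cons a (y ∘ i.succAbove) := by
  funext j
  refine Fin.cases ?_ (fun j' => ?_) j
  · simp [Fin.succ_succAbove_zero]
  · simp [Fin.succ_succAbove_succ]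

lemma K_dX {ℓ : ℕ} (a : G) (f : (Fin (ℓ+1) → G) → V) :
    K a (dFull f) = f - dFull (K a f) := by
  funext y
  show dFull f (Fin.cons a y) = f y - dFull (K a f) y
  rw [dFull, Fin.sum_univ_succ]
  have h0 : (fun j : Fin (ℓ+1) => (Fin.cons a y : Fin (ℓ+2) → G) ((0 : Fin (ℓ+2)).succAbove j)) = y := by
    funext j
    rw [Fin.succAbove_zero]
    exact Fin.cons_succ (α := fun _ => G) a y j
  rw [h0]
  simp only [Fin.val_zero, pow_zero, one_smul]
  have hrest : ∀ i : Fin (ℓ+1),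
      ((-1 : ℤ) ^ ((i.succ : Fin (ℓ+2)) : ℕ)) • f (fun j => (Fin.cons a y : Fin (ℓ+2) → G) ((i.succ).succAbove j))
        = -(((-1 : ℤ) ^ (i : ℕ)) • (K a f) (fun j => y (i.succAbove j))) := by
    intro i
    have : (fun j : Fin (ℓ+1) => (Fin.cons a y : Fin (ℓ+2) → G) ((i.succ).succAbove j))
        = (Fin.cons a (y ∘ i.succAbove) : Fin (ℓ+1) → G) :=
      funext fun j => congrFun (cons_comp_succAbove_succ a y i) j
    rw [this, Fin.val_succ, pow_succ, K]
    simp [neg_smul]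
    rfl
  rw [Finset.sum_congr rfl fun i _ => hrest i, Finset.sum_neg_distrib]
  rw [dFull]
  abel

-- d ∘ d = 0
lemma dXdX {ℓ : ℕ} (f : (Fin ℓ → G) → V) : dFull (dFull f) = 0 := by
  induction ℓ with
  | zero =>
      funext x
      have hconst : ∀ y z : Fin 1 → G, dFull f y = dFull f z := by
        intro y z
        unfold dFull
        refine Finset.sum_congr rfl fun i _ => ?_
        congr 1
        exact congrArg f (funext fun j => j.elim0)
      rw [dFull, Fin.sum_univ_two]
      rw [hconst (fun j => x ((0:Fin 2).succAbove j)) (fun j => x ((1:Fin 2).succAbove j))]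
      simp
  | succ n ih =>
      funext x
      have hx : x = Fin.cons (x 0) (fun j => x j.succ) := by
        funext j
        refine Fin.cases ?_ (fun j' => ?_) j <;> simp
      rw [hx]
      have : dFull (dFull f) (Fin.cons (x 0) fun j => x j.succ)
          = K (x 0) (dFull (dFull f)) (fun j => x j.succ) := rfl
      rw [this, K_dX, K_dX, dXsub]
      simp [ih]

/-- The contracting homotopy. -/
noncomputable def Hm : (m : ℕ) → ((Fin (m+1) → G) → V) → ((Fin m → G) → V)
  | 0, _ => 0
  | (m+1), f => fun x => f (Fin.cons (x 0) x)
      - altCochainR (K (x 0) f) x - dFull (Hm m (K (x 0) f)) x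

lemma Hm_succ_apply (m : ℕ) (f : (Fin (m+2) → G) → V) (x : Fin (m+1) → G) :
    Hm (m+1) f x = f (Fin.cons (x 0) x)
      - altCochainR (K (x 0) f) x - dFull (Hm m (K (x 0) f)) x := rfl

lemma Hm_sub : ∀ (m : ℕ) (f g : (Fin (m+1) → G) → V), Hm m (f - g) = Hm m f - Hm m g
  | 0, f, g => by
      funext x
      show (0:V) = 0 - 0
      simp
  | (m+1), f, g => by
      funext x
      simp only [Pi.sub_apply]
      rw [Hm_succ_apply, Hm_succ_apply, Hm_succ_apply, K_sub, aXsub, Hm_sub m, dXsub]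
      simp only [Pi.sub_apply]
      abel

lemma Hm_zero : ∀ m : ℕ, Hm (G := G) (V := V) m 0 = 0
  | 0 => rfl
  | (m+1) => by
      funext x
      rw [Hm_succ_apply]
      have hK : K (x 0) (0 : (Fin (m+2) → G) → V) = 0 := rfl
      rw [hK, aXzero, Hm_zero m, dXzero]
      simp

/-- The homotopy identity. -/
lemma main_id : ∀ (m : ℕ) (f : (Fin (m+1) → G) → V),
    dFull (Hm m f) + Hm (m+1) (dFull f) = f - altCochainR f
  | 0, f => by
      funext x
      have h1 : Hm (G := G) (V := V) 0 f = 0 := rfl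
      have h2 : Hm (G := G) (V := V) 0 (K (x 0) (dFull f)) = 0 := rfl
      show dFull (Hm 0 f) x + Hm 1 (dFull f) x = (f - altCochainR f) x
      rw [Hm_succ_apply, h1, h2, dXzero, aXone (f := K (x 0) (dFull f)), aXone (f := f)]
      have h3 : K (x 0) (dFull f) x = dFull f (Fin.cons (x 0) x) := rfl
      rw [h3]
      simp
  | (m+1), f => by
      funext x
      have hKd : K (x 0) (dFull f) = f - dFull (K (x 0) f) := K_dX (x 0) f
      have hIH' : Hm (m+1) (dFull (K (x 0) f))
          = (K (x 0) f - altCochainR (K (x 0) f)) - dFull (Hm m (K (x 0) f)) := by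
        rw [← main_id m (K (x 0) f)]
        abel
      have hB : dFull (Hm (m+1) (K (x 0) (dFull f)))
          = dFull (Hm (m+1) f) - (dFull (K (x 0) f) - altCochainR (dFull (K (x 0) f))) := by
        rw [hKd, Hm_sub, hIH', dXsub, dXsub, dXsub, dXdX, alt_d]
        abel
      have hA : altCochainR (K (x 0) (dFull f)) = altCochainR f - altCochainR (dFull (K (x 0) f)) := by
        rw [hKd, aXsub]
      have hcons : dFull f (Fin.cons (x 0) x) = (f - dFull (K (x 0) f)) x := by
        rw [← hKd]; rfl
      show dFull (Hm (m+1) f) x + Hm (m+1+1) (dFull f) x = (f - altCochainR f) x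
      rw [Hm_succ_apply, hcons, hA, hB]
      simp only [Pi.sub_apply]
      abel


/-! ### Naturality -/

lemma dXnat (φ : G → G) {ℓ : ℕ} (f : (Fin ℓ → G) → V) :
    dFull (fun y => f (φ ∘ y)) = fun x => dFull f (φ ∘ x) := rfl

lemma aXnat (φ : G → G) {ℓ : ℕ} (f : (Fin ℓ → G) → V) :
    altCochainR (fun y => f (φ ∘ y)) = fun x => altCochainR f (φ ∘ x) := rfl

lemma Hm_nat (φ : G → G) : ∀ (m : ℕ) (f : (Fin (m+1) → G) → V),
    Hm m (fun y => f (φ ∘ y)) = fun x => Hm m f (φ ∘ x)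
  | 0, f => rfl
  | (m+1), f => by
      funext x
      rw [Hm_succ_apply]
      have hK : K (x 0) (fun y => f (φ ∘ y)) = fun y => (K (φ (x 0)) f) (φ ∘ y) := by
        funext y
        show f (φ ∘ Fin.cons (x 0) y) = f (Fin.cons (φ (x 0)) (φ ∘ y))
        rw [Fin.comp_cons]
      rw [hK, aXnat, Hm_nat φ m, dXnat]
      have h1 : f (φ ∘ Fin.cons (x 0) x) = f (Fin.cons ((φ ∘ x) 0) (φ ∘ x)) := by
        rw [Fin.comp_cons]
        rfl
      rw [h1]
      rfl

/-! ### Invariance (now G a group) -/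

variable {H : Type*} [Group H]

lemma dXinv {ℓ : ℕ} {f : (Fin ℓ → H) → V} (hf : InvFull H f) : InvFull H (dFull f) := by
  intro g x
  unfold dFull
  refine Finset.sum_congr rfl fun i _ => ?_
  congr 1
  exact hf g _

lemma aXinv {ℓ : ℕ} {f : (Fin ℓ → H) → V} (hf : InvFull H f) : InvFull H (altCochainR f) := by
  intro g x
  unfold altCochainR
  congr 1
  refine Finset.sum_congr rfl fun σ _ => ?_
  congr 1
  exact hf g (x ∘ σ)

lemma Inv_sub {ℓ : ℕ} {f g : (Fin ℓ → H) → V} (hf : InvFull H f) (hg : InvFull H g) :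
    InvFull H (f - g) := by
  intro a x
  simp only [Pi.sub_apply]
  rw [hf a x, hg a x]

lemma Hm_inv (m : ℕ) {f : (Fin (m+1) → H) → V} (hf : InvFull H f) : InvFull H (Hm m f) := by
  intro g x
  have hfe : (fun y : Fin (m+1) → H => f ((fun t => g * t) ∘ y)) = f := by
    funext y
    exact hf g y
  have h := congrFun (Hm_nat (fun t => g * t) m f) x
  rw [hfe] at h
  exact h.symm

/-! ### Continuity -/

variable [TopologicalSpace G] [TopologicalSpace V] [IsTopologicalAddGroup V]
  [ContinuousSMul ℝ V]

lemma cont_precomp {a b : ℕ} (ρ : Fin b → Fin a) :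
    Continuous (fun x : Fin a → G => x ∘ ρ) :=
  continuous_pi fun j => continuous_apply (ρ j)

lemma dXcont {ℓ : ℕ} {f : (Fin ℓ → G) → V} (hf : Continuous f) : Continuous (dFull f) := by
  have : dFull f = fun x => ∑ i : Fin (ℓ + 1), ((-1 : ℝ) ^ (i : ℕ)) • f (x ∘ i.succAbove) :=
    funext fun x => dXeq f x
  rw [this]
  exact continuous_finset_sum _ fun i _ =>
    Continuous.const_smul (hf.comp (cont_precomp _)) _

lemma aXcont {ℓ : ℕ} {f : (Fin ℓ → G) → V} (hf : Continuous f) : Continuous (altCochainR f) := by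
  unfold altCochainR
  refine Continuous.const_smul ?_ _
  exact continuous_finset_sum _ fun σ _ =>
    Continuous.const_smul (hf.comp (cont_precomp _)) _

lemma Hm_cont_param : ∀ (m k : ℕ) (F : (Fin k → G) → (Fin (m+1) → G) → V),
    Continuous (fun p : (Fin k → G) × (Fin (m+1) → G) => F p.1 p.2) →
    Continuous (fun p : (Fin k → G) × (Fin m → G) => Hm m (F p.1) p.2)
  | 0, k, F, hF => by
      have h : (fun p : (Fin k → G) × (Fin 0 → G) => Hm 0 (F p.1) p.2)
          = fun _ => (0 : V) := rfl
      rw [h]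
      exact continuous_const
  | (m+1), k, F, hF => by
      have hcons : ∀ {m' : ℕ} (ρ : Fin m' → Fin (m+1)),
          Continuous (fun p : (Fin k → G) × (Fin (m+1) → G) =>
            (Fin.cons (p.2 0) (p.2 ∘ ρ) : Fin (m'+1) → G)) := by
        intro m' ρ
        refine continuous_pi fun j => ?_
        induction j using Fin.cases with
        | zero => exact (continuous_apply (0 : Fin (m+1))).comp continuous_snd
        | succ j' => exact (continuous_apply (ρ j')).comp continuous_snd
      have hT1 : Continuous (fun p : (Fin k → G) × (Fin (m+1) → G) =>
          F p.1 (Fin.cons (p.2 0) p.2)) := by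
        have := hF.comp (Continuous.prodMk continuous_fst (hcons id))
        exact this
      have hT2 : Continuous (fun p : (Fin k → G) × (Fin (m+1) → G) =>
          altCochainR (K (p.2 0) (F p.1)) p.2) := by
        have h : (fun p : (Fin k → G) × (Fin (m+1) → G) => altCochainR (K (p.2 0) (F p.1)) p.2)
            = fun p => (Nat.factorial (m+1) : ℝ)⁻¹ •
                ∑ σ : Equiv.Perm (Fin (m+1)), (((Equiv.Perm.sign σ : ℤ) : ℝ)) •
                  F p.1 (Fin.cons (p.2 0) (p.2 ∘ σ)) := rfl
        rw [h]
        refine Continuous.const_smul ?_ _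
        refine continuous_finset_sum _ fun σ _ => Continuous.const_smul ?_ _
        exact hF.comp (Continuous.prodMk continuous_fst (hcons ⇑σ))
      -- the parametrized function for the recursive call
      have hF'c : Continuous (fun p : (Fin (k+1) → G) × (Fin (m+1) → G) =>
          (fun (q : Fin (k+1) → G) (y : Fin (m+1) → G) =>
            F (q ∘ Fin.succ) (Fin.cons (q 0) y)) p.1 p.2) := by
        refine hF.comp (Continuous.prodMk ?_ ?_)
        · exact continuous_pi fun j => (continuous_apply (j.succ)).comp continuous_fst
        · refine continuous_pi fun j => ?_
          induction j using Fin.cases with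
          | zero => exact (continuous_apply (0 : Fin (k+1))).comp continuous_fst
          | succ j' => exact (continuous_apply j').comp continuous_snd
      have ihc := Hm_cont_param m (k+1)
        (fun (q : Fin (k+1) → G) (y : Fin (m+1) → G) => F (q ∘ Fin.succ) (Fin.cons (q 0) y)) hF'c
      have key : ∀ (q : Fin k → G) (a : G),
          Hm m (K a (F q)) = Hm m ((fun (q' : Fin (k+1) → G) (y : Fin (m+1) → G) =>
            F (q' ∘ Fin.succ) (Fin.cons (q' 0) y)) (Fin.cons a q)) := by
        intro q a
        congr 1
      have hT3 : Continuous (fun p : (Fin k → G) × (Fin (m+1) → G) =>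
          dFull (Hm m (K (p.2 0) (F p.1))) p.2) := by
        have heq : (fun p : (Fin k → G) × (Fin (m+1) → G) =>
            dFull (Hm m (K (p.2 0) (F p.1))) p.2)
            = fun p => ∑ i : Fin (m+1), ((-1:ℝ)^(i:ℕ)) •
                Hm m ((fun (q' : Fin (k+1) → G) (y : Fin (m+1) → G) =>
                  F (q' ∘ Fin.succ) (Fin.cons (q' 0) y)) (Fin.cons (p.2 0) p.1))
                  (p.2 ∘ i.succAbove) := by
          funext p
          rw [dXeq]
          exact Finset.sum_congr rfl fun i _ => by rw [key]
        rw [heq]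
        refine continuous_finset_sum _ fun i _ => Continuous.const_smul ?_ _
        refine ihc.comp (Continuous.prodMk ?_ ?_)
        · refine continuous_pi fun j => ?_
          induction j using Fin.cases with
          | zero => exact (continuous_apply (0 : Fin (m+1))).comp continuous_snd
          | succ j' => exact (continuous_apply j').comp continuous_fst
        · exact (cont_precomp _).comp continuous_snd
      have htot : (fun p : (Fin k → G) × (Fin (m+1) → G) => Hm (m+1) (F p.1) p.2)
          = fun p => F p.1 (Fin.cons (p.2 0) p.2)
              - altCochainR (K (p.2 0) (F p.1)) p.2 - dFull (Hm m (K (p.2 0) (F p.1))) p.2 := rfl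
      rw [htot]
      exact (hT1.sub hT2).sub hT3

lemma Hm_cont (m : ℕ) {f : (Fin (m+1) → G) → V} (hf : Continuous f) :
    Continuous (Hm m f) := by
  have h := Hm_cont_param m 0 (fun _ => f) (hf.comp continuous_snd)
  have h2 : Continuous (fun x : Fin m → G => ((fun i => i.elim0 : Fin 0 → G), x)) :=
    Continuous.prodMk continuous_const continuous_id
  exact h.comp h2


end CGCAuxProof

/-- For a topological group `G` and a finite-dimensional real vector space `V` (a trivial
`G`-module), the coboundary on continuous invariant homogeneous cochains preserves the sign
decomposition, and the cohomology of the complementary subcomplex `rC_cts^•(G,V)^G` vanishes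
in every degree; equivalently, the inclusion of the alternating subcomplex
`sC_cts^•(G,V)^G` induces an isomorphism on continuous group cohomology. -/
theorem continuous_group_cohomology_is_alternating
    (G : Type*) [Group G] [TopologicalSpace G] [IsTopologicalGroup G]
    (V : Type*) [AddCommGroup V] [Module ℝ V] [TopologicalSpace V]
    [IsTopologicalAddGroup V] [ContinuousSMul ℝ V] [FiniteDimensional ℝ V] :
    -- δ preserves continuity, invariance and the sign decomposition
    (∀ (ℓ : ℕ) (f : (Fin (ℓ + 1) → G) → V), Continuous f → InvFull G f →
      Continuous (dFull f) ∧ InvFull G (dFull f) ∧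
      (altCochainR f = f → altCochainR (dFull f) = dFull f) ∧
      (altCochainR f = 0 → altCochainR (dFull f) = 0)) ∧
    -- H^0 of the r-part vanishes
    (∀ f : (Fin 1 → G) → V, Continuous f → InvFull G f → altCochainR f = 0 →
      dFull f = 0 → f = 0) ∧
    -- H^{n+1} of the r-part vanishes
    (∀ (n : ℕ) (f : (Fin (n + 2) → G) → V), Continuous f → InvFull G f →
      altCochainR f = 0 → dFull f = 0 →
      ∃ w : (Fin (n + 1) → G) → V,
        Continuous w ∧ InvFull G w ∧ altCochainR w = 0 ∧ f = dFull w) ∧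
    -- the inclusion of the s-part is bijective on H^0
    (∀ f : (Fin 1 → G) → V, Continuous f → InvFull G f → dFull f = 0 →
      altCochainR f = f) ∧
    -- the inclusion of the s-part is surjective on H^{n+1}
    (∀ (n : ℕ) (f : (Fin (n + 2) → G) → V), Continuous f → InvFull G f → dFull f = 0 →
      ∃ u : (Fin (n + 2) → G) → V,
        Continuous u ∧ InvFull G u ∧ altCochainR u = u ∧ dFull u = 0 ∧
        ∃ w : (Fin (n + 1) → G) → V, Continuous w ∧ InvFull G w ∧ f = u + dFull w) ∧
    -- the inclusion of the s-part is injective on H^{n+1}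
    (∀ (n : ℕ) (u : (Fin (n + 2) → G) → V), Continuous u → InvFull G u →
      altCochainR u = u → dFull u = 0 →
      (∃ w : (Fin (n + 1) → G) → V, Continuous w ∧ InvFull G w ∧ u = dFull w) →
      ∃ ws : (Fin (n + 1) → G) → V,
        Continuous ws ∧ InvFull G ws ∧ altCochainR ws = ws ∧ u = dFull ws) := by
  refine ⟨?_, ?_, ?_, ?_, ?_, ?_⟩
  · intro ℓ f hc hi
    refine ⟨CGCAuxProof.dXcont hc, CGCAuxProof.dXinv hi, ?_, ?_⟩
    · intro h
      rw [CGCAuxProof.alt_d, h]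
    · intro h
      rw [CGCAuxProof.alt_d, h, CGCAuxProof.dXzero]
  · intro f _ _ h0 _
    exact (CGCAuxProof.aXone (f := f)).symm.trans h0
  · intro n f hc hi ha hd
    have hmain := CGCAuxProof.main_id (n+1) f
    rw [hd, CGCAuxProof.Hm_zero, add_zero, ha, sub_zero] at hmain
    refine ⟨CGCAuxProof.Hm (n+1) f - altCochainR (CGCAuxProof.Hm (n+1) f), ?_, ?_, ?_, ?_⟩
    · exact (CGCAuxProof.Hm_cont _ hc).sub (CGCAuxProof.aXcont (CGCAuxProof.Hm_cont _ hc))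
    · exact CGCAuxProof.Inv_sub (CGCAuxProof.Hm_inv _ hi)
        (CGCAuxProof.aXinv (CGCAuxProof.Hm_inv _ hi))
    · rw [CGCAuxProof.aXsub, CGCAuxProof.aXidem, sub_self]
    · rw [CGCAuxProof.dXsub, ← CGCAuxProof.alt_d, hmain, ha, sub_zero]
  · intro f _ _ _
    exact CGCAuxProof.aXone
  · intro n f hc hi hd
    have hu_d : dFull (altCochainR f) = 0 := by
      rw [← CGCAuxProof.alt_d, hd, CGCAuxProof.aXzero]
    have hrd : dFull (f - altCochainR f) = 0 := by
      rw [CGCAuxProof.dXsub, hd, hu_d, sub_self]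
    have hra : altCochainR (f - altCochainR f) = 0 := by
      rw [CGCAuxProof.aXsub, CGCAuxProof.aXidem, sub_self]
    have hmain := CGCAuxProof.main_id (n+1) (f - altCochainR f)
    rw [hrd, CGCAuxProof.Hm_zero, add_zero, hra, sub_zero] at hmain
    refine ⟨altCochainR f, CGCAuxProof.aXcont hc, CGCAuxProof.aXinv hi,
      CGCAuxProof.aXidem f, hu_d,
      CGCAuxProof.Hm (n+1) (f - altCochainR f), ?_, ?_, ?_⟩
    · exact CGCAuxProof.Hm_cont _ (hc.sub (CGCAuxProof.aXcont hc))
    · exact CGCAuxProof.Hm_inv _ (CGCAuxProof.Inv_sub hi (CGCAuxProof.aXinv hi))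
    · rw [hmain]
      abel
  · rintro n u hc hi ha hd ⟨w, hwc, hwi, hwd⟩
    refine ⟨altCochainR w, CGCAuxProof.aXcont hwc, CGCAuxProof.aXinv hwi,
      CGCAuxProof.aXidem w, ?_⟩
    rw [← CGCAuxProof.alt_d, ← hwd, ha]
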